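/- Let G be the standard Gaussian CDF. Choose b_n such that 1 - G(b_n) = 1/n and set a_n = 1/b_n. Then for all x ∈ ℝ, lim_{n→∞} G^n(a_n x + b_n) = exp(-exp(-x)). -/

import Mathlib

open MeasureTheory Filter Topology Real

set_option maxHeartbeats 1000000

noncomputable def phi (s : ℝ) : ℝ := (Real.sqrt (2 * Real.pi))⁻¹ * Real.exp (-s ^ 2 / 2)

lemma phi_pos (s : ℝ) : 0 < phi s := by
  unfold phi
  positivity

lemma sqrt2pi_pos : 0 < Real.sqrt (2 * Real.pi) := by positivity

lemma integrable_phi : Integrable phi := by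
  have h := (integrable_exp_neg_mul_sq (by norm_num : (0:ℝ) < 1/2)).const_mul
    (Real.sqrt (2 * Real.pi))⁻¹
  refine h.congr (Eventually.of_forall fun s => ?_)
  unfold phi; ring_nf

lemma integral_phi : ∫ s, phi s = 1 := by
  unfold phi
  rw [MeasureTheory.integral_const_mul]
  have : (fun s : ℝ => Real.exp (-s ^ 2 / 2)) = fun s : ℝ => Real.exp (-(1/2) * s ^ 2) := by
    funext s; ring_nf
  rw [this, integral_gaussian]
  rw [show Real.pi / (1/2) = 2 * Real.pi by ring]
  field_simp

lemma hasDerivAt_phi (s : ℝ) : HasDerivAt phi (-s * phi s) s := by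
  have h1 : HasDerivAt (fun s : ℝ => -s ^ 2 / 2) (-s) s := by
    have := ((hasDerivAt_pow 2 s).neg).div_const 2
    exact this.congr_deriv (by norm_num; ring)
  have h2 := (h1.exp).const_mul (Real.sqrt (2 * Real.pi))⁻¹
  exact h2.congr_deriv (by unfold phi; ring)

lemma continuous_phi : Continuous phi := by
  unfold phi; continuity

lemma tendsto_phi_atTop : Tendsto phi atTop (𝓝 0) := by
  have h0 : Tendsto (fun s : ℝ => s ^ 2) atTop atTop := tendsto_pow_atTop two_ne_zero
  have h : Tendsto (fun s : ℝ => -s ^ 2 / 2) atTop atBot :=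
    (tendsto_neg_atTop_atBot.comp h0).atBot_div_const (by norm_num)
  have h2 := (Real.tendsto_exp_atBot.comp h).const_mul (Real.sqrt (2 * Real.pi))⁻¹
  rw [mul_zero] at h2
  exact h2.congr fun s => rfl

lemma tail_eq (G : ℝ → ℝ)
    (hG : ∀ t : ℝ, G t = ∫ s in Set.Iic t, (Real.sqrt (2 * Real.pi))⁻¹ * Real.exp (-s ^ 2 / 2))
    (t : ℝ) : 1 - G t = ∫ s in Set.Ioi t, phi s := by
  have h1 : G t = ∫ s in Set.Iic t, phi s := hG t
  have h2 : (∫ s in Set.Iic t, phi s) + ∫ s in Set.Ioi t, phi s = ∫ s, phi s :=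
    intervalIntegral.integral_Iic_add_Ioi integrable_phi.integrableOn integrable_phi.integrableOn
  rw [integral_phi] at h2
  linarith

lemma integrable_id_mul_phi : Integrable (fun s => s * phi s) := by
  have h := (integrable_mul_exp_neg_mul_sq (by norm_num : (0:ℝ) < 1/2)).const_mul
    (Real.sqrt (2 * Real.pi))⁻¹
  refine h.congr (Eventually.of_forall fun s => ?_)
  unfold phi; ring_nf

lemma integral_id_mul_phi (t : ℝ) : ∫ s in Set.Ioi t, s * phi s = phi t := by
  have hderiv : ∀ s ∈ Set.Ici t, HasDerivAt (fun u => -phi u) (s * phi s) s := by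
    intro s _
    exact (hasDerivAt_phi s).neg.congr_deriv (by ring)
  have htend : Tendsto (fun u => -phi u) atTop (𝓝 0) := by
    simpa using tendsto_phi_atTop.neg
  have := integral_Ioi_of_hasDerivAt_of_tendsto' hderiv
    integrable_id_mul_phi.integrableOn htend
  simpa using this

lemma tail_upper {t : ℝ} (ht : 0 < t) : (∫ s in Set.Ioi t, phi s) ≤ phi t / t := by
  have hmono : ∫ s in Set.Ioi t, phi s ≤ ∫ s in Set.Ioi t, (s / t) * phi s := by
    apply setIntegral_mono_on integrable_phi.integrableOn
    · exact ((integrable_id_mul_phi.const_mul t⁻¹).congr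
        (Eventually.of_forall fun s => by ring)).integrableOn
    · exact measurableSet_Ioi
    · intro s hs
      have h1 : 1 ≤ s / t := (one_le_div ht).mpr (le_of_lt hs)
      nlinarith [phi_pos s]
  have heq : ∫ s in Set.Ioi t, (s / t) * phi s = phi t / t := by
    have : ∀ s, (s / t) * phi s = t⁻¹ * (s * phi s) := fun s => by ring
    simp_rw [this]
    rw [MeasureTheory.integral_const_mul, integral_id_mul_phi]
    ring
  linarith

lemma tail_lower {t : ℝ} (ht : 0 < t) :
    phi t * t / (t ^ 2 + 1) ≤ ∫ s in Set.Ioi t, phi s := by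
  set g : ℝ → ℝ := fun s => phi s * s / (s ^ 2 + 1) with hg
  have hderiv : ∀ s ∈ Set.Ici t, HasDerivAt g (phi s * (2 / (s ^ 2 + 1) ^ 2 - 1)) s := by
    intro s _
    have hs1 : s ^ 2 + 1 ≠ 0 := by positivity
    have hd1 : HasDerivAt (fun u : ℝ => phi u * u) (-s * phi s * s + phi s) s := by
      have := (hasDerivAt_phi s).mul (hasDerivAt_id' (x := s))
      exact this.congr_deriv (by ring)
    have hd2 : HasDerivAt (fun u : ℝ => u ^ 2 + 1) (2 * s) s := by
      simpa using (hasDerivAt_pow 2 s).add_const 1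
    have := hd1.div hd2 hs1
    exact this.congr_deriv (by field_simp; ring)
  have hbound : ∀ s, |phi s * (2 / (s ^ 2 + 1) ^ 2 - 1)| ≤ phi s := by
    intro s
    have h1 : (0:ℝ) < (s ^ 2 + 1) ^ 2 := by positivity
    have h2 : (1:ℝ) ≤ (s ^ 2 + 1) ^ 2 := by nlinarith [sq_nonneg s]
    have h3 : 2 / (s ^ 2 + 1) ^ 2 ≤ 2 := by
      rw [div_le_iff₀ h1]; nlinarith
    have h4 : 0 < 2 / (s ^ 2 + 1) ^ 2 := by positivity
    rw [abs_mul, abs_of_pos (phi_pos s)]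
    have : |2 / (s ^ 2 + 1) ^ 2 - 1| ≤ 1 := by
      rw [abs_le]; constructor <;> nlinarith
    nlinarith [phi_pos s]
  have hint : IntegrableOn (fun s => phi s * (2 / (s ^ 2 + 1) ^ 2 - 1)) (Set.Ioi t) := by
    refine Integrable.integrableOn (Integrable.mono integrable_phi ?_ ?_)
    · apply Continuous.aestronglyMeasurable
      apply continuous_phi.mul
      apply Continuous.sub _ continuous_const
      exact continuous_const.div (by continuity) (fun s => by positivity)
    · refine Eventually.of_forall fun s => ?_
      rw [Real.norm_eq_abs, Real.norm_eq_abs, abs_of_pos (phi_pos s)]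
      exact hbound s
  have htend : Tendsto g atTop (𝓝 0) := by
    apply squeeze_zero' (f := g) (g := phi)
    · filter_upwards [eventually_ge_atTop (0:ℝ)] with s hs
      have : (0:ℝ) < s ^ 2 + 1 := by positivity
      exact div_nonneg (mul_nonneg (phi_pos s).le hs) this.le
    · filter_upwards [eventually_ge_atTop (0:ℝ)] with s hs
      have h1 : (0:ℝ) < s ^ 2 + 1 := by positivity
      rw [hg, div_le_iff₀ h1]
      have h2 : s ≤ s ^ 2 + 1 := by nlinarith [sq_nonneg (2*s-1)]
      have := mul_le_mul_of_nonneg_left h2 (phi_pos s).le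
      linarith
    · exact tendsto_phi_atTop
  have key := integral_Ioi_of_hasDerivAt_of_tendsto' hderiv hint htend
  have hmono : (∫ s in Set.Ioi t, phi s * (1 - 2 / (s ^ 2 + 1) ^ 2)) ≤ ∫ s in Set.Ioi t, phi s := by
    apply setIntegral_mono_on
    · exact hint.neg.congr (Eventually.of_forall fun s => by simp only [Pi.neg_apply]; ring)
    · exact integrable_phi.integrableOn
    · exact measurableSet_Ioi
    · intro s _
      have h4 : 0 < 2 / (s ^ 2 + 1) ^ 2 := by positivity
      nlinarith [phi_pos s]
  have heq : (∫ s in Set.Ioi t, phi s * (1 - 2 / (s ^ 2 + 1) ^ 2)) = g t := by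
    have h5 : (∫ s in Set.Ioi t, phi s * (1 - 2 / (s ^ 2 + 1) ^ 2))
        = - ∫ s in Set.Ioi t, phi s * (2 / (s ^ 2 + 1) ^ 2 - 1) := by
      rw [← MeasureTheory.integral_neg]
      congr 1; funext s; ring
    rw [h5, key]; ring
  rw [heq] at hmono
  exact hmono

lemma tail_pos (t : ℝ) : 0 < ∫ s in Set.Ioi t, phi s := by
  rw [setIntegral_pos_iff_support_of_nonneg_ae
    (Eventually.of_forall fun s => (phi_pos s).le) integrable_phi.integrableOn]
  have hs : Function.support phi = Set.univ := Set.eq_univ_of_forall fun s => (phi_pos s).ne'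
  rw [hs, Set.univ_inter, Real.volume_Ioi]
  simp

lemma G_lt_one (G : ℝ → ℝ)
    (hG : ∀ t : ℝ, G t = ∫ s in Set.Iic t, (Real.sqrt (2 * Real.pi))⁻¹ * Real.exp (-s ^ 2 / 2))
    (t : ℝ) : G t < 1 := by
  have := tail_eq G hG t
  have h2 := tail_pos t
  linarith

lemma G_pos (G : ℝ → ℝ)
    (hG : ∀ t : ℝ, G t = ∫ s in Set.Iic t, (Real.sqrt (2 * Real.pi))⁻¹ * Real.exp (-s ^ 2 / 2))
    (t : ℝ) : 0 < G t := by
  have hG' : G t = ∫ s in Set.Iic t, phi s := hG t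
  rw [hG', setIntegral_pos_iff_support_of_nonneg_ae
    (Eventually.of_forall fun s => (phi_pos s).le) integrable_phi.integrableOn]
  have hs : Function.support phi = Set.univ := Set.eq_univ_of_forall fun s => (phi_pos s).ne'
  rw [hs, Set.univ_inter, Real.volume_Iic]
  simp

lemma G_strictMono (G : ℝ → ℝ)
    (hG : ∀ t : ℝ, G t = ∫ s in Set.Iic t, (Real.sqrt (2 * Real.pi))⁻¹ * Real.exp (-s ^ 2 / 2)) :
    StrictMono G := by
  intro u v huv
  have hG' : ∀ t, G t = ∫ s in Set.Iic t, phi s := hG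
  have h1 : G v - G u = ∫ s in u..v, phi s := by
    rw [hG' u, hG' v]
    exact intervalIntegral.integral_Iic_sub_Iic integrable_phi.integrableOn
      integrable_phi.integrableOn
  have h2 : 0 < ∫ s in u..v, phi s := by
    exact intervalIntegral.intervalIntegral_pos_of_pos_on
      (continuous_phi.intervalIntegrable u v) (fun s _ => phi_pos s) huv
  linarith

lemma b_tendsto (G : ℝ → ℝ)
    (hG : ∀ t : ℝ, G t = ∫ s in Set.Iic t, (Real.sqrt (2 * Real.pi))⁻¹ * Real.exp (-s ^ 2 / 2))
    (b : ℕ → ℝ) (hb : ∀ n : ℕ, 2 ≤ n → 1 - G (b n) = 1 / n) :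
    Tendsto b atTop atTop := by
  rw [tendsto_atTop]
  intro M
  have hM : G M < 1 := G_lt_one G hG M
  have h1 : Tendsto (fun n : ℕ => 1 - 1 / (n : ℝ)) atTop (𝓝 1) := by
    have := tendsto_one_div_atTop_nhds_zero_nat (𝕜 := ℝ)
    simpa using tendsto_const_nhds.sub this
  have h2 : ∀ᶠ n : ℕ in atTop, G M < 1 - 1 / (n : ℝ) :=
    h1.eventually_const_lt hM
  filter_upwards [h2, eventually_ge_atTop 2] with n hn h2n
  have h3 : G (b n) = 1 - 1 / (n : ℝ) := by
    have := hb n h2n; linarith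
  by_contra h
  push_neg at h
  have := (G_strictMono G hG) h
  rw [h3] at this
  exact absurd this (not_lt.mpr hn.le)

lemma phi_ratio {x β : ℝ} (hβ : β ≠ 0) :
    phi (β⁻¹ * x + β) = phi β * Real.exp (-x - x ^ 2 * (β⁻¹) ^ 2 / 2) := by
  unfold phi
  rw [mul_assoc, ← Real.exp_add]
  congr 1
  field_simp
  ring

lemma key_bounds (G : ℝ → ℝ)
    (hG : ∀ t : ℝ, G t = ∫ s in Set.Iic t, (Real.sqrt (2 * Real.pi))⁻¹ * Real.exp (-s ^ 2 / 2))
    {x β : ℝ} (hβ1 : 1 ≤ β) (hβx : |x| + 1 ≤ β) :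
    Real.exp (-x - x ^ 2 * (β⁻¹) ^ 2 / 2) *
        ((1 + x * (β⁻¹) ^ 2) / (1 + (2 * x + 1) * (β⁻¹) ^ 2 + x ^ 2 * ((β⁻¹) ^ 2) ^ 2))
      ≤ (1 - G (β⁻¹ * x + β)) / (1 - G β) ∧
    (1 - G (β⁻¹ * x + β)) / (1 - G β)
      ≤ Real.exp (-x - x ^ 2 * (β⁻¹) ^ 2 / 2) * ((1 + (β⁻¹) ^ 2) / (1 + x * (β⁻¹) ^ 2)) := by
  have hβ0 : 0 < β := lt_of_lt_of_le one_pos hβ1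
  have hββ : β * β⁻¹ = 1 := mul_inv_cancel₀ (ne_of_gt hβ0)
  set γ : ℝ := β⁻¹ * x + β with hγdef
  have hu1 : β⁻¹ ≤ 1 := by
    rw [inv_le_one_iff₀]; right; exact hβ1
  have hu0 : 0 < β⁻¹ := inv_pos.mpr hβ0
  have hγ1 : 1 ≤ γ := by
    have h1 : β⁻¹ * x ≥ -(β⁻¹ * |x|) := by
      have := neg_abs_le x
      nlinarith
    have h2 : β⁻¹ * |x| ≤ |x| := by nlinarith [abs_nonneg x]
    have : γ ≥ β - |x| := by rw [hγdef]; nlinarith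
    linarith
  have hγ0 : 0 < γ := lt_of_lt_of_le one_pos hγ1
  have hpβ := phi_pos β
  have hpγ := phi_pos γ
  have hT := tail_eq G hG γ
  have hS := tail_eq G hG β
  have hTu : 1 - G γ ≤ phi γ / γ := by rw [hT]; exact tail_upper hγ0
  have hTl : phi γ * γ / (γ ^ 2 + 1) ≤ 1 - G γ := by rw [hT]; exact tail_lower hγ0
  have hSu : 1 - G β ≤ phi β / β := by rw [hS]; exact tail_upper hβ0
  have hSl : phi β * β / (β ^ 2 + 1) ≤ 1 - G β := by rw [hS]; exact tail_lower hβ0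
  have hSlpos : 0 < phi β * β / (β ^ 2 + 1) := div_pos (mul_pos hpβ hβ0) (by positivity)
  have hSupos : 0 < phi β / β := div_pos hpβ hβ0
  have hTlpos : 0 < phi γ * γ / (γ ^ 2 + 1) := div_pos (mul_pos hpγ hγ0) (by positivity)
  have hTupos : 0 < phi γ / γ := div_pos hpγ hγ0
  have hSpos : 0 < 1 - G β := lt_of_lt_of_le hSlpos hSl
  have hTpos : 0 < 1 - G γ := lt_of_lt_of_le hTlpos hTl
  have hE : phi γ = phi β * Real.exp (-x - x ^ 2 * (β⁻¹) ^ 2 / 2) := phi_ratio (ne_of_gt hβ0)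
  have hden1 : 0 < 1 + x * (β⁻¹) ^ 2 := by
    have h3 : x * (β⁻¹) ^ 2 ≥ -(|x| * (β⁻¹) ^ 2) := by nlinarith [neg_abs_le x, sq_nonneg β⁻¹]
    have hx1 : |x| < β := by have := abs_nonneg x; linarith
    have h2 : |x| * (β⁻¹) ^ 2 < 1 := by nlinarith [abs_nonneg x]
    linarith
  have hden2 : 0 < 1 + (2 * x + 1) * (β⁻¹) ^ 2 + x ^ 2 * ((β⁻¹) ^ 2) ^ 2 := by
    have h4 : 1 + (2 * x + 1) * (β⁻¹) ^ 2 + x ^ 2 * ((β⁻¹) ^ 2) ^ 2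
        = (γ ^ 2 + 1) * (β⁻¹) ^ 2 := by
      rw [hγdef]; field_simp; ring
    rw [h4]; positivity
  have hu2 : ((β⁻¹:ℝ)) ^ 2 ≠ 0 := by positivity
  have hγβ : γ * β = x + β ^ 2 := by
    rw [hγdef]; field_simp
  have hγ21 : (γ:ℝ) ^ 2 + 1 ≠ 0 := by positivity
  have h1p : (1:ℝ) + (β⁻¹) ^ 2 = (β ^ 2 + 1) * (β⁻¹) ^ 2 := by
    field_simp
  have hxp : (1:ℝ) + x * (β⁻¹) ^ 2 = (γ * β) * (β⁻¹) ^ 2 := by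
    rw [hγβ]; field_simp; ring
  have h4 : 1 + (2 * x + 1) * (β⁻¹) ^ 2 + x ^ 2 * ((β⁻¹) ^ 2) ^ 2
      = (γ ^ 2 + 1) * (β⁻¹) ^ 2 := by
    rw [hγdef]; field_simp; ring
  constructor
  · -- lower bound
    have h1 : phi γ * γ / (γ ^ 2 + 1) / (phi β / β) ≤ (1 - G γ) / (1 - G β) :=
      div_le_div₀ hTpos.le hTl hSpos hSu
    refine le_trans (le_of_eq ?_) h1
    rw [hxp, h4, mul_div_mul_right _ _ hu2, hE]
    field_simp
  · -- upper bound
    have h1 : (1 - G γ) / (1 - G β) ≤ phi γ / γ / (phi β * β / (β ^ 2 + 1)) :=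
      div_le_div₀ hTupos.le hTu hSlpos hSl
    refine le_trans h1 (le_of_eq ?_)
    rw [h1p, hxp, mul_div_mul_right _ _ hu2, hE]
    field_simp

/-- The standard Gaussian distribution is in the max-domain of attraction of the
Gumbel distribution: with `b_n` defined by `1 - G(b_n) = 1/n` and `a_n = 1/b_n`,
`G^n(a_n x + b_n) → exp(-exp(-x))` for all `x`. -/
theorem gaussian_in_gumbel_domain
    (G : ℝ → ℝ)
    (hG : ∀ t : ℝ, G t = ∫ s in Set.Iic t, (Real.sqrt (2 * Real.pi))⁻¹ * Real.exp (-s ^ 2 / 2))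
    (b : ℕ → ℝ) (hb : ∀ n : ℕ, 2 ≤ n → 1 - G (b n) = 1 / n)
    (a : ℕ → ℝ) (hab : ∀ n, a n = (b n)⁻¹) (x : ℝ) :
    Tendsto (fun n : ℕ => (G (a n * x + b n)) ^ n) atTop
      (𝓝 (Real.exp (-Real.exp (-x)))) := by
  have hbtop : Tendsto b atTop atTop := b_tendsto G hG b hb
  set c : ℕ → ℝ := fun n => a n * x + b n with hc
  have hu : Tendsto (fun n => (b n)⁻¹) atTop (𝓝 0) := tendsto_inv_atTop_zero.comp hbtop
  have hu2 : Tendsto (fun n => ((b n)⁻¹) ^ 2) atTop (𝓝 0) := by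
    simpa using hu.pow 2
  have hev : ∀ᶠ n : ℕ in atTop, (1 ≤ b n ∧ |x| + 1 ≤ b n) ∧ 2 ≤ n :=
    ((hbtop.eventually_ge_atTop 1).and (hbtop.eventually_ge_atTop (|x| + 1))).and
      (eventually_ge_atTop 2)
  -- the exponential factor
  have hE : Tendsto (fun n => Real.exp (-x - x ^ 2 * ((b n)⁻¹) ^ 2 / 2)) atTop
      (𝓝 (Real.exp (-x))) := by
    have h1 : Tendsto (fun n => -x - x ^ 2 * ((b n)⁻¹) ^ 2 / 2) atTop (𝓝 (-x)) := by
      have h2 := (hu2.const_mul (x ^ 2)).div_const 2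
      simpa using (tendsto_const_nhds (x := -x)).sub h2
    exact (Real.continuous_exp.tendsto _).comp h1
  -- upper bound sequence
  have hU : Tendsto (fun n => Real.exp (-x - x ^ 2 * ((b n)⁻¹) ^ 2 / 2) *
      ((1 + ((b n)⁻¹) ^ 2) / (1 + x * ((b n)⁻¹) ^ 2))) atTop (𝓝 (Real.exp (-x))) := by
    have hnum : Tendsto (fun n => 1 + ((b n)⁻¹) ^ 2) atTop (𝓝 1) := by
      simpa using (tendsto_const_nhds (x := (1:ℝ))).add hu2
    have hden : Tendsto (fun n => 1 + x * ((b n)⁻¹) ^ 2) atTop (𝓝 1) := by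
      simpa using (tendsto_const_nhds (x := (1:ℝ))).add (hu2.const_mul x)
    have := hE.mul (hnum.div hden one_ne_zero)
    simpa using this
  -- lower bound sequence
  have hL : Tendsto (fun n => Real.exp (-x - x ^ 2 * ((b n)⁻¹) ^ 2 / 2) *
      ((1 + x * ((b n)⁻¹) ^ 2) /
        (1 + (2 * x + 1) * ((b n)⁻¹) ^ 2 + x ^ 2 * (((b n)⁻¹) ^ 2) ^ 2))) atTop
      (𝓝 (Real.exp (-x))) := by
    have hnum : Tendsto (fun n => 1 + x * ((b n)⁻¹) ^ 2) atTop (𝓝 1) := by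
      simpa using (tendsto_const_nhds (x := (1:ℝ))).add (hu2.const_mul x)
    have hden : Tendsto (fun n => 1 + (2 * x + 1) * ((b n)⁻¹) ^ 2 +
        x ^ 2 * (((b n)⁻¹) ^ 2) ^ 2) atTop (𝓝 1) := by
      have h5 : Tendsto (fun n => (((b n)⁻¹) ^ 2) ^ 2) atTop (𝓝 0) := by
        simpa using hu2.pow 2
      have := ((tendsto_const_nhds (x := (1:ℝ))).add (hu2.const_mul (2 * x + 1))).add
        (h5.const_mul (x ^ 2))
      simpa using this
    have := hE.mul (hnum.div hden one_ne_zero)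
    simpa using this
  -- Step A
  have hA : Tendsto (fun n : ℕ => (n : ℝ) * (1 - G (c n))) atTop (𝓝 (Real.exp (-x))) := by
    apply tendsto_of_tendsto_of_tendsto_of_le_of_le' hL hU
    · filter_upwards [hev] with n ⟨⟨h1, h2⟩, h2n⟩
      have hkey := (key_bounds G hG (x := x) h1 h2).1
      have hcn : c n = (b n)⁻¹ * x + b n := by rw [hc]; simp [hab n]
      have hSn : 1 - G (b n) = 1 / (n : ℝ) := hb n h2n
      have hn0 : (0:ℝ) < n := by positivity
      rw [← hcn] at hkey
      calc _ ≤ (1 - G (c n)) / (1 - G (b n)) := hkey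
        _ = (n : ℝ) * (1 - G (c n)) := by rw [hSn]; field_simp
    · filter_upwards [hev] with n ⟨⟨h1, h2⟩, h2n⟩
      have hkey := (key_bounds G hG (x := x) h1 h2).2
      have hcn : c n = (b n)⁻¹ * x + b n := by rw [hc]; simp [hab n]
      have hSn : 1 - G (b n) = 1 / (n : ℝ) := hb n h2n
      have hn0 : (0:ℝ) < n := by positivity
      rw [← hcn] at hkey
      calc (n : ℝ) * (1 - G (c n)) = (1 - G (c n)) / (1 - G (b n)) := by
            rw [hSn]; field_simp
        _ ≤ _ := hkey
  -- t n → 0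
  set t : ℕ → ℝ := fun n => 1 - G (c n) with ht
  have htpos : ∀ n, 0 < t n := fun n => by
    have := G_lt_one G hG (c n); simp [ht]; linarith
  have ht0 : Tendsto t atTop (𝓝 0) := by
    have := hA.mul tendsto_inv_atTop_nhds_zero_nat
    rw [mul_zero] at this
    apply this.congr'
    filter_upwards [eventually_ge_atTop 1] with n hn
    have hn0 : (n:ℝ) ≠ 0 := by positivity
    field_simp [ht]
    rfl
  -- log slope
  have hslope : Tendsto (fun n => Real.log (1 - t n) / t n) atTop (𝓝 (-1)) := by
    have hd : HasDerivAt (fun y : ℝ => Real.log (1 - y)) (-1) 0 := by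
      have h1 : HasDerivAt (fun y : ℝ => 1 - y) (-1) 0 := by
        simpa using (hasDerivAt_id (0:ℝ)).const_sub 1
      have := h1.log (by norm_num)
      simpa using this
    have hs := hasDerivAt_iff_tendsto_slope.mp hd
    have htn' : Tendsto t atTop (𝓝[≠] (0:ℝ)) :=
      tendsto_nhdsWithin_of_tendsto_nhds_of_eventually_within t ht0
        (Eventually.of_forall fun n => (htpos n).ne')
    have := hs.comp htn'
    apply this.congr
    intro n
    have : t n ≠ 0 := (htpos n).ne'
    simp [slope_def_field, Real.log_one]
  -- n log G(c n) → -exp(-x)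
  have hlog : Tendsto (fun n : ℕ => (n : ℝ) * Real.log (G (c n))) atTop
      (𝓝 (-Real.exp (-x))) := by
    have := hA.mul hslope
    rw [show Real.exp (-x) * (-1) = -Real.exp (-x) by ring] at this
    apply this.congr'
    filter_upwards with n
    have h1 : G (c n) = 1 - t n := by rw [ht]; ring
    have h2 : t n ≠ 0 := (htpos n).ne'
    rw [h1]
    field_simp
    ring
  -- conclude
  have hexp := (Real.continuous_exp.tendsto _).comp hlog
  apply hexp.congr'
  filter_upwards with n
  have hGp : 0 < G (c n) := G_pos G hG (c n)
  simp only [Function.comp_apply]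
  rw [← Real.log_pow, Real.exp_log (pow_pos hGp n)]
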